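/- For every monotone function f : Ω → Ω and all countable ordinals α and γ, iterating the iterate corresponds to ordinal multiplication: Iter_α (Iter_γ f) β = Iter_{γ·α} f β for every β ∈ Ω (where γ·α is ordinal multiplication). -/

import Mathlib

/-!  Framework: finite type structure over Ω = countable ordinals,
     limsup/liminf, transfinite iteration functionals, hereditarily
     positive and hereditarily monotone functionals. -/

noncomputable section
namespace IterOrd

open Ordinal

theorem omega1_pos : (0 : Ordinal) < ω₁ := Ordinal.omega0_pos.trans Ordinal.omega0_lt_omega_one

/-- `Om` is Ω, the set of countable ordinals (ordinals `< ω₁`). -/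
abbrev Om : Type 1 := {o : Ordinal // o < ω₁}

/-- Infimum of a subset of Ω (the minimum for nonempty sets; `0` for `∅`). -/
def infOm (s : Set Om) : Om :=
  ⟨sInf (Subtype.val '' s), by
    rcases (Subtype.val '' s).eq_empty_or_nonempty with h | h
    · rw [h]; simpa using omega1_pos
    · obtain ⟨x, _, he⟩ := csInf_mem h
      exact he ▸ x.2⟩

/-- Supremum of a subset of Ω.  Whenever the supremum of the set exists in Ω
(in particular for every countable subset, by regularity of `ω₁`) this is the
genuine supremum; otherwise it takes a junk value. -/
def supOm (s : Set Om) : Om :=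
  if h : sSup (Subtype.val '' s) < ω₁ then ⟨sSup (Subtype.val '' s), h⟩ else ⟨0, omega1_pos⟩

/-- Finite types over the base type `o` (interpreted as Ω). -/
inductive Ty : Type
  | base : Ty
  | arrow : Ty → Ty → Ty
deriving DecidableEq

/-- The full type structure over Ω: `El base = Ω` and
`El (arrow σ τ)` is the set of all functions `El σ → El τ`. -/
@[reducible] def El : Ty → Type 1
  | .base => Om
  | .arrow σ τ => El σ → El τ

/-- The order on each `El σ`: the ordinal order at base type, pointwise at arrow types. -/
def Le : (σ : Ty) → El σ → El σ → Prop
  | .base => fun x y => x ≤ y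
  | .arrow σ τ => fun f g => ∀ x : El σ, Le τ (f x) (g x)

/-- Suprema, computed pointwise at function types. -/
def supEl : (σ : Ty) → Set (El σ) → El σ
  | .base => supOm
  | .arrow σ τ => fun S (x : El σ) => supEl τ ((fun f : El (.arrow σ τ) => f x) '' S)

/-- Infima, computed pointwise at function types. -/
def infEl : (σ : Ty) → Set (El σ) → El σ
  | .base => infOm
  | .arrow σ τ => fun S (x : El σ) => infEl τ ((fun f : El (.arrow σ τ) => f x) '' S)

/-- `limsup_{ξ→ζ} f ξ = inf_{γ<ζ} sup_{γ≤ξ<ζ} f ξ`. -/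
def limsupEl (σ : Ty) (ζ : Ordinal) (f : ∀ ξ : Ordinal, ξ < ζ → El σ) : El σ :=
  infEl σ {y | ∃ γ, ∃ _ : γ < ζ, y = supEl σ {z | ∃ ξ, ∃ h : ξ < ζ, γ ≤ ξ ∧ z = f ξ h}}

/-- `liminf_{ξ→ζ} f ξ = sup_{γ<ζ} inf_{γ≤ξ<ζ} f ξ`. -/
def liminfEl (σ : Ty) (ζ : Ordinal) (f : ∀ ξ : Ordinal, ξ < ζ → El σ) : El σ :=
  supEl σ {y | ∃ γ, ∃ _ : γ < ζ, y = infEl σ {z | ∃ ξ, ∃ h : ξ < ζ, γ ≤ ξ ∧ z = f ξ h}}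

/-- `limsup` of a ζ-indexed sequence of ordinals. -/
def oLimsup (ζ : Ordinal) (a : Ordinal → Ordinal) : Ordinal :=
  sInf {s | ∃ γ, γ < ζ ∧ s = sSup (a '' {ξ | γ ≤ ξ ∧ ξ < ζ})}

/-- `liminf` of a ζ-indexed sequence of ordinals. -/
def oLiminf (ζ : Ordinal) (a : Ordinal → Ordinal) : Ordinal :=
  sSup {s | ∃ γ, γ < ζ ∧ s = sInf (a '' {ξ | γ ≤ ξ ∧ ξ < ζ})}

/-- The α-iteration functional of type σ:
`Iter 0 f x = x`, `Iter (α+1) f x = f (Iter α f x)`, and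
`Iter μ f x = limsup_{ξ→μ} Iter ξ f x` for limit μ. -/
def Iter (σ : Ty) (α : Ordinal) : (El σ → El σ) → El σ → El σ :=
  Ordinal.limitRecOn (motive := fun _ => (El σ → El σ) → El σ → El σ) α
    (fun _ x => x)
    (fun _ ih f x => f (ih f x))
    (fun μ _ ih f x => limsupEl σ μ (fun ξ h => ih ξ h f x))

/-- The pair (hereditarily positive, ≤hp), defined simultaneously by recursion on the type.
Every element of `Ω` and of `Ω_{ρ→τ}` with `ρ ≠ τ` is h.p., and `≤hp` there is `≤`;
`f : Ω_{τ→τ}` is h.p. iff it preserves h.p., is inflationary on h.p. arguments and is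
monotone (w.r.t. `≤hp`) on h.p. arguments; `f ≤hp f'` on `Ω_{τ→τ}` iff `f x ≤hp f' x`
for every h.p. `x`. -/
def HPaux : (σ : Ty) → (El σ → Prop) × (El σ → El σ → Prop)
  | .base => ⟨fun _ => True, fun x y => x ≤ y⟩
  | .arrow ρ τ =>
      ⟨fun f =>
        if h : ρ = τ then
          (∀ x, (HPaux ρ).1 x → (HPaux τ).1 (f x)) ∧
          (∀ x, (HPaux ρ).1 x → (HPaux τ).2 (cast (congrArg El h) x) (f x)) ∧
          (∀ x y, (HPaux ρ).1 x → (HPaux ρ).1 y → (HPaux ρ).2 x y → (HPaux τ).2 (f x) (f y))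
        else True,
       fun f g =>
        if ρ = τ then ∀ x, (HPaux ρ).1 x → (HPaux τ).2 (f x) (g x)
        else Le (.arrow ρ τ) f g⟩

/-- Hereditarily positive functionals. -/
def Hp (σ : Ty) : El σ → Prop := (HPaux σ).1

/-- The order `≤hp`. -/
def HpLe (σ : Ty) : El σ → El σ → Prop := (HPaux σ).2

/-- `f =hp g` iff `f ≤hp g` and `g ≤hp f`. -/
def HpEq (σ : Ty) (f g : El σ) : Prop := HpLe σ f g ∧ HpLe σ g f

/-- The pair (hereditarily monotone, ≤ on the hereditarily monotone structure),
by recursion on the type.  `f` is hereditarily monotone iff it maps hereditarily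
monotone arguments to hereditarily monotone values, monotonically; the order is
pointwise over hereditarily monotone arguments (i.e. the order of `Ω^mon`). -/
def HMaux : (σ : Ty) → (El σ → Prop) × (El σ → El σ → Prop)
  | .base => ⟨fun _ => True, fun x y => x ≤ y⟩
  | .arrow σ τ =>
      ⟨fun f =>
        (∀ x, (HMaux σ).1 x → (HMaux τ).1 (f x)) ∧
        (∀ x y, (HMaux σ).1 x → (HMaux σ).1 y → (HMaux σ).2 x y → (HMaux τ).2 (f x) (f y)),
       fun f g => ∀ x, (HMaux σ).1 x → (HMaux τ).2 (f x) (g x)⟩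

/-- Hereditarily monotone functionals: the members of the type structure `Ω^mon`. -/
def HM (σ : Ty) : El σ → Prop := (HMaux σ).1

/-- The (pointwise) order of the hereditarily monotone type structure `Ω^mon`. -/
def LeHM (σ : Ty) : El σ → El σ → Prop := (HMaux σ).2

/-- Equality in the hereditarily monotone type structure `Ω^mon`. -/
def EqHM (σ : Ty) (f g : El σ) : Prop := LeHM σ f g ∧ LeHM σ g f

section AuxLemmas
open Ordinal Cardinal

lemma omega1_isLimit : Order.IsSuccLimit (ω₁ : Ordinal) := by
  rw [← Cardinal.ord_aleph]
  exact Cardinal.isSuccLimit_ord (Cardinal.aleph0_le_aleph 1)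

lemma lt_omega1_iff {o : Ordinal} : o < ω₁ ↔ o.card ≤ ℵ₀ := by
  rw [← Cardinal.ord_aleph, Cardinal.lt_ord, ← Cardinal.succ_aleph0, Order.lt_succ_iff]

lemma add_lt_omega1 {a b : Ordinal} (ha : a < ω₁) (hb : b < ω₁) : a + b < ω₁ := by
  rw [lt_omega1_iff] at *
  rw [Ordinal.card_add]
  calc a.card + b.card ≤ ℵ₀ + ℵ₀ := add_le_add ha hb
    _ = ℵ₀ := Cardinal.aleph0_add_aleph0

lemma mul_lt_omega1 {a b : Ordinal} (ha : a < ω₁) (hb : b < ω₁) : a * b < ω₁ := by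
  rw [lt_omega1_iff] at *
  rw [Ordinal.card_mul]
  calc a.card * b.card ≤ ℵ₀ * ℵ₀ := mul_le_mul' ha hb
    _ = ℵ₀ := Cardinal.aleph0_mul_aleph0

lemma csSup_lt_omega1 {s : Set Ordinal} (hc : s.Countable) (hs : ∀ x ∈ s, x < ω₁) :
    sSup s < ω₁ := by
  rcases s.eq_empty_or_nonempty with rfl | hne
  · simpa using omega1_pos
  obtain ⟨F, rfl⟩ := hc.exists_eq_range hne
  have : iSup F < ω₁ := by
    exact Ordinal.iSup_lt_omega_one
      (fun n => hs _ ⟨n, rfl⟩)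
  exact this

lemma sSup_val_lt {ζ : Ordinal} (hζ : ζ < ω₁) (g : ∀ ξ : Ordinal, ξ < ζ → Om)
    (T : Set Om) (hT : ∀ x ∈ T, ∃ ξ, ∃ h : ξ < ζ, x = g ξ h) :
    sSup (Subtype.val '' T) < ω₁ := by
  have hcnt : Countable ζ.ToType := by
    rw [← Cardinal.mk_le_aleph0_iff, Cardinal.mk_toType]
    exact lt_omega1_iff.mp hζ
  set e := Ordinal.ToType.mk (o := ζ) with he
  set F : ζ.ToType → Ordinal := fun i => (g (e.symm i).1 (e.symm i).2).1 with hF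
  have hsub : Subtype.val '' T ⊆ Set.range F := by
    rintro _ ⟨x, hx, rfl⟩
    obtain ⟨ξ, h, rfl⟩ := hT x hx
    refine ⟨e ⟨ξ, h⟩, ?_⟩
    simp only [hF, OrderIso.symm_apply_apply]
  apply csSup_lt_omega1 ((Set.countable_range F).mono hsub)
  rintro _ ⟨x, hx, rfl⟩
  exact x.2

lemma infOm_le {s : Set Om} {x : Om} (hx : x ∈ s) : infOm s ≤ x := by
  show sInf (Subtype.val '' s) ≤ x.1
  exact csInf_le' ⟨x, hx, rfl⟩

lemma le_infOm {s : Set Om} {b : Om} (hs : s.Nonempty) (h : ∀ x ∈ s, b ≤ x) : b ≤ infOm s := by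
  show b.1 ≤ sInf (Subtype.val '' s)
  exact le_csInf (hs.image _) (by rintro _ ⟨x, hx, rfl⟩; exact h x hx)

lemma infOm_singleton (x : Om) : infOm {x} = x :=
  le_antisymm (infOm_le rfl) (le_infOm ⟨x, rfl⟩ (by rintro y rfl; exact le_rfl))

lemma isLUB_supOm {T : Set Om} (hb : sSup (Subtype.val '' T) < ω₁) (hne : T.Nonempty) :
    IsLUB T (supOm T) := by
  rw [supOm, dif_pos hb]
  constructor
  · intro x hx
    show x.1 ≤ sSup (Subtype.val '' T)
    exact le_csSup ⟨ω₁, by rintro _ ⟨y, _, rfl⟩; exact y.2.le⟩ ⟨x, hx, rfl⟩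
  · intro b hb'
    show sSup (Subtype.val '' T) ≤ b.1
    exact csSup_le (hne.image _) (by rintro _ ⟨y, hy, rfl⟩; exact hb' hy)

lemma supOm_eq_of_max {T : Set Om} {x : Om} (hx : x ∈ T) (h : ∀ y ∈ T, y ≤ x) : supOm T = x := by
  have hs : sSup (Subtype.val '' T) = x.1 := by
    apply le_antisymm
    · exact csSup_le ⟨x.1, ⟨x, hx, rfl⟩⟩ (by rintro _ ⟨y, hy, rfl⟩; exact h y hy)
    · exact le_csSup ⟨x.1, by rintro _ ⟨y, hy, rfl⟩; exact h y hy⟩ ⟨x, hx, rfl⟩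
  rw [supOm, dif_pos (by rw [hs]; exact x.2)]
  exact Subtype.ext hs

lemma limsupEl_base (ζ : Ordinal) (g : ∀ ξ, ξ < ζ → Om) :
    limsupEl .base ζ g =
      infOm {y | ∃ γ, ∃ _ : γ < ζ, y = supOm {z | ∃ ξ, ∃ h : ξ < ζ, γ ≤ ξ ∧ z = g ξ h}} := rfl

lemma limsupEl_isLUB {ζ : Ordinal} (hζ : ζ < ω₁) (hl : Order.IsSuccLimit ζ)
    (g : ∀ ξ, ξ < ζ → Om)
    (hmono : ∀ ξ ξ' (h : ξ < ζ) (h' : ξ' < ζ), ξ ≤ ξ' → g ξ h ≤ g ξ' h') :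
    IsLUB {x | ∃ ξ, ∃ h : ξ < ζ, x = g ξ h} (limsupEl .base ζ g) := by
  have key : ∀ γ, γ < ζ → IsLUB {x | ∃ ξ, ∃ h : ξ < ζ, x = g ξ h}
      (supOm {z | ∃ ξ, ∃ h : ξ < ζ, γ ≤ ξ ∧ z = g ξ h}) := by
    intro γ hγ
    have hbdd : sSup (Subtype.val '' {z | ∃ ξ, ∃ h : ξ < ζ, γ ≤ ξ ∧ z = g ξ h}) < ω₁ :=
      sSup_val_lt hζ g _ (by rintro x ⟨ξ, h, _, rfl⟩; exact ⟨ξ, h, rfl⟩)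
    have hne : {z | ∃ ξ, ∃ h : ξ < ζ, γ ≤ ξ ∧ z = g ξ h}.Nonempty := ⟨g γ hγ, γ, hγ, le_rfl, rfl⟩
    have h1 := isLUB_supOm hbdd hne
    constructor
    · rintro x ⟨ξ, h, rfl⟩
      rcases le_total γ ξ with hle | hle
      · exact h1.1 ⟨ξ, h, hle, rfl⟩
      · exact (hmono ξ γ h hγ hle).trans (h1.1 ⟨γ, hγ, le_rfl, rfl⟩)
    · intro b hbub
      exact h1.2 (by rintro x ⟨ξ, h, _, rfl⟩; exact hbub ⟨ξ, h, rfl⟩)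
  rw [limsupEl_base]
  have h0 := key 0 hl.pos
  have hset : {y | ∃ γ, ∃ _ : γ < ζ, y = supOm {z | ∃ ξ, ∃ h : ξ < ζ, γ ≤ ξ ∧ z = g ξ h}}
      = {supOm {z | ∃ ξ, ∃ h : ξ < ζ, (0 : Ordinal) ≤ ξ ∧ z = g ξ h}} := by
    ext y
    simp only [Set.mem_setOf_eq, Set.mem_singleton_iff]
    constructor
    · rintro ⟨γ, hγ, rfl⟩
      exact (key γ hγ).unique h0
    · intro hy
      exact ⟨0, hl.pos, hy⟩
  rw [hset, infOm_singleton]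
  exact h0

lemma limsupEl_isGLB {ζ : Ordinal} (hl : Order.IsSuccLimit ζ) (g : ∀ ξ, ξ < ζ → Om)
    (hanti : ∀ ξ ξ' (h : ξ < ζ) (h' : ξ' < ζ), ξ ≤ ξ' → g ξ' h' ≤ g ξ h) :
    IsGLB {x | ∃ ξ, ∃ h : ξ < ζ, x = g ξ h} (limsupEl .base ζ g) := by
  rw [limsupEl_base]
  have key : ∀ γ (hγ : γ < ζ), supOm {z | ∃ ξ, ∃ h : ξ < ζ, γ ≤ ξ ∧ z = g ξ h} = g γ hγ := by
    intro γ hγ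
    apply supOm_eq_of_max
    · exact ⟨γ, hγ, le_rfl, rfl⟩
    · rintro y ⟨ξ, h, hle, rfl⟩
      exact hanti γ ξ hγ h hle
  have hset : {y | ∃ γ, ∃ _ : γ < ζ, y = supOm {z | ∃ ξ, ∃ h : ξ < ζ, γ ≤ ξ ∧ z = g ξ h}}
      = {x | ∃ ξ, ∃ h : ξ < ζ, x = g ξ h} := by
    ext y
    simp only [Set.mem_setOf_eq]
    constructor
    · rintro ⟨γ, hγ, rfl⟩; exact ⟨γ, hγ, key γ hγ⟩
    · rintro ⟨ξ, h, rfl⟩; exact ⟨ξ, h, (key ξ h).symm⟩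
  rw [hset]
  constructor
  · rintro x ⟨ξ, h, rfl⟩; exact infOm_le ⟨ξ, h, rfl⟩
  · intro b hb; exact le_infOm ⟨g 0 hl.pos, 0, hl.pos, rfl⟩ (fun x hx => hb hx)

lemma iter_zero (σ : Ty) (f : El σ → El σ) (x : El σ) : Iter σ 0 f x = x := by
  unfold Iter; rw [Ordinal.limitRecOn_zero]

lemma iter_succ (σ : Ty) (α : Ordinal) (f : El σ → El σ) (x : El σ) :
    Iter σ (Order.succ α) f x = f (Iter σ α f x) := by
  unfold Iter; rw [Ordinal.limitRecOn_succ]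

lemma iter_limit (σ : Ty) {μ : Ordinal} (h : Order.IsSuccLimit μ) (f : El σ → El σ) (x : El σ) :
    Iter σ μ f x = limsupEl σ μ (fun ξ _ => Iter σ ξ f x) := by
  unfold Iter; rw [Ordinal.limitRecOn_limit _ _ _ _ h]

end AuxLemmas

section MainLemmas
open Ordinal

variable {f : Om → Om} {β : Om}

lemma seq_incr (hf : Monotone f) (hβ : β ≤ f β) :
    ∀ a, a < ω₁ →
      (∀ a', a' ≤ a → Iter .base a' f β ≤ Iter .base a f β) ∧
        Iter .base a f β ≤ f (Iter .base a f β) := by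
  intro a
  induction a using Ordinal.induction with
  | h a IH =>
    intro ha
    rcases Ordinal.zero_or_succ_or_isSuccLimit a with rfl | ⟨b, rfl⟩ | hlim
    · refine ⟨fun a' ha' => ?_, ?_⟩
      · rw [nonpos_iff_eq_zero.mp ha']
      · rw [iter_zero]; exact hβ
    · have hb : b < Order.succ b := Order.lt_succ b
      obtain ⟨IH1, IH2⟩ := IH b hb (hb.trans ha)
      have hstep : Iter .base b f β ≤ Iter .base (Order.succ b) f β := by
        rw [iter_succ]; exact IH2
      constructor
      · intro a' ha'
        rcases eq_or_lt_of_le ha' with rfl | h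
        · exact le_rfl
        · exact (IH1 a' (Order.lt_succ_iff.mp h)).trans hstep
      · rw [iter_succ]
        exact hf IH2
    · have hLUB : IsLUB {x | ∃ ξ, ∃ _ : ξ < a, x = Iter .base ξ f β} (Iter .base a f β) := by
        rw [iter_limit _ hlim]
        exact limsupEl_isLUB ha hlim _
          (fun ξ ξ' h h' hle => (IH ξ' h' (h'.trans ha)).1 ξ hle)
      constructor
      · intro a' ha'
        rcases eq_or_lt_of_le ha' with rfl | h
        · exact le_rfl
        · exact hLUB.1 ⟨a', h, rfl⟩
      · refine hLUB.2 ?_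
        rintro x ⟨ξ, h, rfl⟩
        exact ((IH ξ h (h.trans ha)).2).trans (hf (hLUB.1 ⟨ξ, h, rfl⟩))

lemma seq_decr (hf : Monotone f) (hβ : f β ≤ β) :
    ∀ a, a < ω₁ →
      (∀ a', a' ≤ a → Iter .base a f β ≤ Iter .base a' f β) ∧
        f (Iter .base a f β) ≤ Iter .base a f β := by
  intro a
  induction a using Ordinal.induction with
  | h a IH =>
    intro ha
    rcases Ordinal.zero_or_succ_or_isSuccLimit a with rfl | ⟨b, rfl⟩ | hlim
    · refine ⟨fun a' ha' => ?_, ?_⟩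
      · rw [nonpos_iff_eq_zero.mp ha']
      · rw [iter_zero]; exact hβ
    · have hb : b < Order.succ b := Order.lt_succ b
      obtain ⟨IH1, IH2⟩ := IH b hb (hb.trans ha)
      have hstep : Iter .base (Order.succ b) f β ≤ Iter .base b f β := by
        rw [iter_succ]; exact IH2
      constructor
      · intro a' ha'
        rcases eq_or_lt_of_le ha' with rfl | h
        · exact le_rfl
        · exact hstep.trans (IH1 a' (Order.lt_succ_iff.mp h))
      · rw [iter_succ]
        exact hf IH2
    · have hGLB : IsGLB {x | ∃ ξ, ∃ _ : ξ < a, x = Iter .base ξ f β} (Iter .base a f β) := by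
        rw [iter_limit _ hlim]
        exact limsupEl_isGLB hlim _
          (fun ξ ξ' h h' hle => (IH ξ' h' (h'.trans ha)).1 ξ hle)
      constructor
      · intro a' ha'
        rcases eq_or_lt_of_le ha' with rfl | h
        · exact le_rfl
        · exact hGLB.1 ⟨a', h, rfl⟩
      · refine hGLB.2 ?_
        rintro x ⟨ξ, h, rfl⟩
        exact (hf (hGLB.1 ⟨ξ, h, rfl⟩)).trans (IH ξ h (h.trans ha)).2

lemma iter_isLUB (hf : Monotone f) (hβ : β ≤ f β) {μ : Ordinal} (hl : Order.IsSuccLimit μ)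
    (hμ : μ < ω₁) :
    IsLUB {x | ∃ ξ, ∃ _ : ξ < μ, x = Iter .base ξ f β} (Iter .base μ f β) := by
  rw [iter_limit _ hl]
  exact limsupEl_isLUB hμ hl _
    (fun ξ ξ' h h' hle => (seq_incr hf hβ ξ' (h'.trans hμ)).1 ξ hle)

lemma iter_isGLB (hf : Monotone f) (hβ : f β ≤ β) {μ : Ordinal} (hl : Order.IsSuccLimit μ)
    (hμ : μ < ω₁) :
    IsGLB {x | ∃ ξ, ∃ _ : ξ < μ, x = Iter .base ξ f β} (Iter .base μ f β) := by
  rw [iter_limit _ hl]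
  exact limsupEl_isGLB hl _
    (fun ξ ξ' h h' hle => (seq_decr hf hβ ξ' (h'.trans hμ)).1 ξ hle)

lemma iter_add_incr (hf : Monotone f) (hβ : β ≤ f β) {a : Ordinal} (ha : a < ω₁) :
    ∀ b, b < ω₁ → Iter .base b f (Iter .base a f β) = Iter .base (a + b) f β := by
  intro b
  induction b using Ordinal.induction with
  | h b IH =>
    intro hb
    rcases Ordinal.zero_or_succ_or_isSuccLimit b with rfl | ⟨c, rfl⟩ | hlim
    · rw [iter_zero, add_zero]
    · have hc : c < Order.succ c := Order.lt_succ c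
      rw [iter_succ, IH c hc (hc.trans hb), Ordinal.add_succ, iter_succ]
    · have habω : a + b < ω₁ := add_lt_omega1 ha hb
      have hab : Order.IsSuccLimit (a + b) := Ordinal.isSuccLimit_add a hlim
      have h1 : Iter .base b f (Iter .base a f β) =
          limsupEl .base b (fun ξ _ => Iter .base (a + ξ) f β) := by
        rw [iter_limit _ hlim]
        congr 1
        funext ξ h
        exact IH ξ h (h.trans hb)
      have hLUB1 : IsLUB {x | ∃ ξ, ∃ _ : ξ < b, x = Iter .base (a + ξ) f β}
          (limsupEl .base b (fun ξ _ => Iter .base (a + ξ) f β)) :=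
        limsupEl_isLUB hb hlim _ (fun ξ ξ' h h' hle =>
          (seq_incr hf hβ (a + ξ') (add_lt_omega1 ha (h'.trans hb))).1 (a + ξ)
            (add_le_add_right hle a))
      have hLUB2 := iter_isLUB hf hβ hab habω
      rw [h1]
      apply le_antisymm
      · apply hLUB1.2
        rintro x ⟨ξ, h, rfl⟩
        exact hLUB2.1 ⟨a + ξ, (add_lt_add_iff_left a).mpr h, rfl⟩
      · apply hLUB2.2
        rintro x ⟨η, h, rfl⟩
        rcases le_or_gt η a with hle | hlt
        · have h2 : Iter .base η f β ≤ Iter .base (a + 0) f β := by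
            rw [add_zero]
            exact (seq_incr hf hβ a ha).1 η hle
          exact h2.trans (hLUB1.1 ⟨0, hlim.pos, rfl⟩)
        · have h2 : a + (η - a) = η := Ordinal.add_sub_cancel_of_le hlt.le
          have h3 : η - a < b := Ordinal.sub_lt_of_lt_add h hlim.pos
          have h4 : Iter .base η f β = Iter .base (a + (η - a)) f β := by rw [h2]
          rw [h4]
          exact hLUB1.1 ⟨η - a, h3, rfl⟩

lemma iter_add_decr (hf : Monotone f) (hβ : f β ≤ β) {a : Ordinal} (ha : a < ω₁) :
    ∀ b, b < ω₁ → Iter .base b f (Iter .base a f β) = Iter .base (a + b) f β := by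
  intro b
  induction b using Ordinal.induction with
  | h b IH =>
    intro hb
    rcases Ordinal.zero_or_succ_or_isSuccLimit b with rfl | ⟨c, rfl⟩ | hlim
    · rw [iter_zero, add_zero]
    · have hc : c < Order.succ c := Order.lt_succ c
      rw [iter_succ, IH c hc (hc.trans hb), Ordinal.add_succ, iter_succ]
    · have habω : a + b < ω₁ := add_lt_omega1 ha hb
      have hab : Order.IsSuccLimit (a + b) := Ordinal.isSuccLimit_add a hlim
      have h1 : Iter .base b f (Iter .base a f β) =
          limsupEl .base b (fun ξ _ => Iter .base (a + ξ) f β) := by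
        rw [iter_limit _ hlim]
        congr 1
        funext ξ h
        exact IH ξ h (h.trans hb)
      have hGLB1 : IsGLB {x | ∃ ξ, ∃ _ : ξ < b, x = Iter .base (a + ξ) f β}
          (limsupEl .base b (fun ξ _ => Iter .base (a + ξ) f β)) :=
        limsupEl_isGLB hlim _ (fun ξ ξ' h h' hle =>
          (seq_decr hf hβ (a + ξ') (add_lt_omega1 ha (h'.trans hb))).1 (a + ξ)
            (add_le_add_right hle a))
      have hGLB2 := iter_isGLB hf hβ hab habω
      rw [h1]
      apply le_antisymm
      · apply hGLB2.2
        rintro x ⟨η, h, rfl⟩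
        rcases le_or_gt η a with hle | hlt
        · have h2 : Iter .base (a + 0) f β ≤ Iter .base η f β := by
            rw [add_zero]
            exact (seq_decr hf hβ a ha).1 η hle
          exact (hGLB1.1 ⟨0, hlim.pos, rfl⟩).trans h2
        · have h2 : a + (η - a) = η := Ordinal.add_sub_cancel_of_le hlt.le
          have h3 : η - a < b := Ordinal.sub_lt_of_lt_add h hlim.pos
          have h4 : Iter .base η f β = Iter .base (a + (η - a)) f β := by rw [h2]
          rw [h4]
          exact hGLB1.1 ⟨η - a, h3, rfl⟩
      · apply hGLB1.2
        rintro x ⟨ξ, h, rfl⟩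
        exact hGLB2.1 ⟨a + ξ, (add_lt_add_iff_left a).mpr h, rfl⟩

lemma iter_mul_incr (hf : Monotone f) (hβ : β ≤ f β) {γ : Ordinal} (hγ : γ < ω₁) :
    ∀ α, α < ω₁ → Iter .base α (Iter .base γ f) β = Iter .base (γ * α) f β := by
  intro α
  induction α using Ordinal.induction with
  | h α IH =>
    intro hα
    rcases Ordinal.zero_or_succ_or_isSuccLimit α with rfl | ⟨c, rfl⟩ | hlim
    · rw [iter_zero, mul_zero, iter_zero]
    · have hc : c < Order.succ c := Order.lt_succ c
      have hcω : c < ω₁ := hc.trans hα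
      rw [iter_succ, IH c hc hcω, Ordinal.mul_succ]
      exact iter_add_incr hf hβ (mul_lt_omega1 hγ hcω) γ hγ
    · have h1 : Iter .base α (Iter .base γ f) β =
          limsupEl .base α (fun ξ _ => Iter .base (γ * ξ) f β) := by
        rw [iter_limit _ hlim]
        congr 1
        funext ξ h
        exact IH ξ h (h.trans hα)
      rw [h1]
      rcases eq_zero_or_pos γ with rfl | hγ0
      · simp only [zero_mul]
        have hLUB : IsLUB {x | ∃ ξ, ∃ _ : ξ < α, x = Iter .base 0 f β}
            (limsupEl .base α (fun ξ _ => Iter .base 0 f β)) :=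
          limsupEl_isLUB hα hlim _ (fun _ _ _ _ _ => le_rfl)
        have hset : {x | ∃ ξ, ∃ _ : ξ < α, x = Iter .base 0 f β}
            = {Iter .base 0 f β} := by
          ext x
          simp only [Set.mem_setOf_eq, Set.mem_singleton_iff]
          exact ⟨fun ⟨_, _, hx⟩ => hx, fun hx => ⟨0, hlim.pos, hx⟩⟩
        rw [hset] at hLUB
        exact hLUB.unique isLUB_singleton
      · have hγμ : Order.IsSuccLimit (γ * α) := Ordinal.isSuccLimit_mul_right hγ0 hlim
        have hγμω : γ * α < ω₁ := mul_lt_omega1 hγ hα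
        have hLUB1 : IsLUB {x | ∃ ξ, ∃ _ : ξ < α, x = Iter .base (γ * ξ) f β}
            (limsupEl .base α (fun ξ _ => Iter .base (γ * ξ) f β)) :=
          limsupEl_isLUB hα hlim _ (fun ξ ξ' h h' hle =>
            (seq_incr hf hβ (γ * ξ') (mul_lt_omega1 hγ (h'.trans hα))).1 (γ * ξ)
              (mul_le_mul_right hle γ))
        have hLUB2 := iter_isLUB hf hβ hγμ hγμω
        apply le_antisymm
        · apply hLUB1.2
          rintro x ⟨ξ, h, rfl⟩
          exact hLUB2.1 ⟨γ * ξ, mul_lt_mul_of_pos_left h hγ0, rfl⟩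
        · apply hLUB2.2
          rintro x ⟨η, h, rfl⟩
          obtain ⟨ξ, hξα, hηξ⟩ := (Ordinal.lt_mul_iff_of_isSuccLimit hlim).mp h
          exact ((seq_incr hf hβ (γ * ξ) (mul_lt_omega1 hγ (hξα.trans hα))).1 η hηξ.le).trans
            (hLUB1.1 ⟨ξ, hξα, rfl⟩)

lemma iter_mul_decr (hf : Monotone f) (hβ : f β ≤ β) {γ : Ordinal} (hγ : γ < ω₁) :
    ∀ α, α < ω₁ → Iter .base α (Iter .base γ f) β = Iter .base (γ * α) f β := by
  intro α
  induction α using Ordinal.induction with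
  | h α IH =>
    intro hα
    rcases Ordinal.zero_or_succ_or_isSuccLimit α with rfl | ⟨c, rfl⟩ | hlim
    · rw [iter_zero, mul_zero, iter_zero]
    · have hc : c < Order.succ c := Order.lt_succ c
      have hcω : c < ω₁ := hc.trans hα
      rw [iter_succ, IH c hc hcω, Ordinal.mul_succ]
      exact iter_add_decr hf hβ (mul_lt_omega1 hγ hcω) γ hγ
    · have h1 : Iter .base α (Iter .base γ f) β =
          limsupEl .base α (fun ξ _ => Iter .base (γ * ξ) f β) := by
        rw [iter_limit _ hlim]
        congr 1
        funext ξ h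
        exact IH ξ h (h.trans hα)
      rw [h1]
      rcases eq_zero_or_pos γ with rfl | hγ0
      · simp only [zero_mul]
        have hGLB : IsGLB {x | ∃ ξ, ∃ _ : ξ < α, x = Iter .base 0 f β}
            (limsupEl .base α (fun ξ _ => Iter .base 0 f β)) :=
          limsupEl_isGLB hlim _ (fun _ _ _ _ _ => le_rfl)
        have hset : {x | ∃ ξ, ∃ _ : ξ < α, x = Iter .base 0 f β}
            = {Iter .base 0 f β} := by
          ext x
          simp only [Set.mem_setOf_eq, Set.mem_singleton_iff]
          exact ⟨fun ⟨_, _, hx⟩ => hx, fun hx => ⟨0, hlim.pos, hx⟩⟩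
        rw [hset] at hGLB
        exact hGLB.unique isGLB_singleton
      · have hγμ : Order.IsSuccLimit (γ * α) := Ordinal.isSuccLimit_mul_right hγ0 hlim
        have hγμω : γ * α < ω₁ := mul_lt_omega1 hγ hα
        have hGLB1 : IsGLB {x | ∃ ξ, ∃ _ : ξ < α, x = Iter .base (γ * ξ) f β}
            (limsupEl .base α (fun ξ _ => Iter .base (γ * ξ) f β)) :=
          limsupEl_isGLB hlim _ (fun ξ ξ' h h' hle =>
            (seq_decr hf hβ (γ * ξ') (mul_lt_omega1 hγ (h'.trans hα))).1 (γ * ξ)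
              (mul_le_mul_right hle γ))
        have hGLB2 := iter_isGLB hf hβ hγμ hγμω
        apply le_antisymm
        · apply hGLB2.2
          rintro x ⟨η, h, rfl⟩
          obtain ⟨ξ, hξα, hηξ⟩ := (Ordinal.lt_mul_iff_of_isSuccLimit hlim).mp h
          exact (hGLB1.1 ⟨ξ, hξα, rfl⟩).trans
            ((seq_decr hf hβ (γ * ξ) (mul_lt_omega1 hγ (hξα.trans hα))).1 η hηξ.le)
        · apply hGLB1.2
          rintro x ⟨ξ, h, rfl⟩
          exact hGLB2.1 ⟨γ * ξ, mul_lt_mul_of_pos_left h hγ0, rfl⟩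

end MainLemmas

/-- For every monotone `f : Ω → Ω` and all countable ordinals `α`, `γ`,
`Iter_α (Iter_γ f) β = Iter_{γ·α} f β` for every `β ∈ Ω`. -/
theorem iter_iter_eq_iter_mul (f : Om → Om) (hf : Monotone f)
    (α γ : Ordinal) (hα : α < ω₁) (hγ : γ < ω₁) (β : Om) :
    Iter .base α (Iter .base γ f) β = Iter .base (γ * α) f β := by
  rcases le_total β (f β) with hβ | hβ
  · exact iter_mul_incr hf hβ hγ α hα
  · exact iter_mul_decr hf hβ hγ α hα

end IterOrd
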